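/- In an observation tree, if a frontier state r is not apart from two distinct basis states q and q', and σ is a witness of the apartness q # q' (i.e., λ^T(q,σ) and λ^T(q',σ) are defined and differ), then after extending the tree so that λ^T(r,σ) becomes defined, r is apart from q or apart from q'. -/
import Mathlib


/-- A partial Mealy machine over a fixed state set `Q`. -/
structure PM (Q I O : Type) where
  trans : Q → I → Option Q
  out1 : Q → I → Option O

namespace PM

variable {Q I O : Type}

def pout (M : PM Q I O) : Q → List I → Option (List O)
  | _, [] => some []
  | q, i :: σ =>
    match M.out1 q i, M.trans q i with
    | some o, some q' => (M.pout q' σ).map (o :: ·)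
    | _, _ => none

/-- States `p` and `q` are apart: some input word on which both outputs are
defined produces different output words. -/
def Apart (M : PM Q I O) (p q : Q) : Prop :=
  ∃ (σ : List I) (a b : List O),
    M.pout p σ = some a ∧ M.pout q σ = some b ∧ a ≠ b

/-- `M'` extends `M`: every defined transition/output of `M` is also defined,
with the same value, in `M'`. -/
def Extends (M M' : PM Q I O) : Prop :=
  (∀ q i x, M.trans q i = some x → M'.trans q i = some x) ∧
  (∀ q i o, M.out1 q i = some o → M'.out1 q i = some o)

end PM

theorem pout_extends {Q I O : Type} {M M' : PM Q I O} (hext : M.Extends M')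
    (σ : List I) : ∀ (p : Q) (a : List O), M.pout p σ = some a → M'.pout p σ = some a := by
  induction σ with
  | nil => intro p a h; simpa [PM.pout] using h
  | cons i σ ih =>
    intro p a h
    simp only [PM.pout] at h ⊢
    rcases ho : M.out1 p i with _ | o <;> rcases ht : M.trans p i with _ | p' <;>
      simp [ho, ht] at h
    rw [hext.2 _ _ _ ho, hext.1 _ _ _ ht]
    rcases h with ⟨a', ha', rfl⟩
    simp [ih p' a' ha']

/-- If, in an observation tree `M`, a frontier state `r` is not apart from
two distinct basis states `q` and `q'`, and `σ` witnesses `q # q'`, then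
after extending the tree to `M'` so that the output of `r` on `σ` becomes
defined, `r` is apart from `q` or apart from `q'`. -/
theorem stmt15 {Q I O : Type} (M M' : PM Q I O) (r q q' : Q)
    (hq : ¬ M.Apart r q) (hq' : ¬ M.Apart r q') (hqq : q ≠ q')
    (σ : List I) (a b : List O)
    (ha : M.pout q σ = some a) (hb : M.pout q' σ = some b) (hab : a ≠ b)
    (hext : M.Extends M') (c : List O) (hc : M'.pout r σ = some c) :
    M'.Apart r q ∨ M'.Apart r q' := by
  have ha' := pout_extends hext σ q a ha
  have hb' := pout_extends hext σ q' b hb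
  by_cases h : c = a
  · right; exact ⟨σ, c, b, hc, hb', h ▸ hab⟩
  · left; exact ⟨σ, c, a, hc, ha', h⟩
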